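/- Consider the random binary reaction network model G_n with class edge probabilities q_{i,j}(n) ∈ (0,1). Let Q_{0,2}, Q_{1,2}, Q_{2,2} : ℕ → (0, ∞) be sequences with Q_{0,2}(n) ≪ n, Q_{1,2}(n) ≪ n, Q_{2,2}(n) ≪ n, and for each n let k_{i,j}(n) be nonnegative integers with k_{i,j}(n) ≤ Q_{i,j}(n) for (i,j) ∈ {(0,2),(1,2),(2,2)} and k_{i,j}(n) ≤ |E_n^{i,j}| for all five classes. Let A_n be the event that every included pair from E_n^{0,2} is of the form {0, e_a + e_b} with a ≠ b, every included pair from E_n^{1,2} is of the form {e_a, e_b + e_c} with a, b, c pairwise distinct, and every included pair from E_n^{2,2} is of the form {e_a + e_b, e_c + e_d} with a, b, c, d pairwise distinct. Then lim_{n→∞} P(A_n | ⋂_{(i,j)} {M_{i,j}(n) = k_{i,j}(n)}) = 1, and for all sufficiently large n, P(A_n | ⋂_{(i,j)} {M_{i,j}(n) = k_{i,j}(n)}) ≥ (1 − 2Q_{0,2}(n)/n)(1 − 4Q_{1,2}(n)/n)(1 − 8Q_{2,2}(n)/n). -/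

import Mathlib

open Finset Filter

noncomputable section

namespace RandomBinaryRN

/-- Complexes are vectors in `ℕⁿ`. -/
abbrev V (n : ℕ) := Fin n → ℕ

/-- The `a`-th unit complex (standard basis vector of `ℕⁿ`). -/
def unit {n : ℕ} (a : Fin n) : V n := Pi.single a 1

/-- The class `E_n^{0,1} = {{0, eᵢ}}` of possible reversible reactions. -/
def E01 (n : ℕ) : Finset (Sym2 (V n)) :=
  Finset.univ.image fun i : Fin n => s((0 : V n), unit i)

/-- The class `E_n^{1,1} = {{eᵢ, eⱼ} : i ≠ j}` of possible reversible reactions. -/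
def E11 (n : ℕ) : Finset (Sym2 (V n)) :=
  ((Finset.univ ×ˢ Finset.univ).filter fun p : Fin n × Fin n => p.1 ≠ p.2).image
    fun p => s(unit p.1, unit p.2)

/-- The class `E_n^{0,2} = {{0, eᵢ + eⱼ}}` of possible reversible reactions. -/
def E02 (n : ℕ) : Finset (Sym2 (V n)) :=
  (Finset.univ ×ˢ Finset.univ).image
    fun p : Fin n × Fin n => s((0 : V n), unit p.1 + unit p.2)

/-- The class `E_n^{1,2} = {{eᵢ, eⱼ + e_k}}` of possible reversible reactions. -/
def E12 (n : ℕ) : Finset (Sym2 (V n)) :=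
  (Finset.univ ×ˢ Finset.univ ×ˢ Finset.univ).image
    fun p : Fin n × Fin n × Fin n => s(unit p.1, unit p.2.1 + unit p.2.2)

/-- The class `E_n^{2,2} = {{eᵢ + eⱼ, e_h + e_k} : eᵢ + eⱼ ≠ e_h + e_k}`. -/
def E22 (n : ℕ) : Finset (Sym2 (V n)) :=
  (((Finset.univ ×ˢ Finset.univ) ×ˢ (Finset.univ ×ˢ Finset.univ)).filter
      fun p : (Fin n × Fin n) × Fin n × Fin n =>
        unit p.1.1 + unit p.1.2 ≠ unit p.2.1 + unit p.2.2).image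
    fun p => s(unit p.1.1 + unit p.1.2, unit p.2.1 + unit p.2.2)

/-- All possible reversible reactions between distinct binary complexes. -/
def allEdges (n : ℕ) : Finset (Sym2 (V n)) :=
  E01 n ∪ E11 n ∪ E02 n ∪ E12 n ∪ E22 n

/-- The inclusion probability of a possible reversible reaction, given the five
class probabilities. -/
def qEdge (n : ℕ) (q01 q11 q02 q12 q22 : ℝ) (ed : Sym2 (V n)) : ℝ :=
  if ed ∈ E01 n then q01
  else if ed ∈ E11 n then q11
  else if ed ∈ E02 n then q02
  else if ed ∈ E12 n then q12
  else q22

/-- The probability that the random graph `G_n` equals the realization `F`: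
each possible reversible reaction is included independently with the probability
of its class. -/
def probF (n : ℕ) (q01 q11 q02 q12 q22 : ℝ) (F : Finset (Sym2 (V n))) : ℝ :=
  (∏ ed ∈ F, qEdge n q01 q11 q02 q12 q22 ed) *
    ∏ ed ∈ allEdges n \ F, (1 - qEdge n q01 q11 q02 q12 q22 ed)

open scoped Classical in
/-- The probability of an event `A` (a predicate on realizations) under the
random binary reaction network model. -/
def Pr (n : ℕ) (q01 q11 q02 q12 q22 : ℝ) (A : Finset (Sym2 (V n)) → Prop) : ℝ :=
  ∑ F ∈ (allEdges n).powerset, if A F then probF n q01 q11 q02 q12 q22 F else 0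

/-- The conditional probability `P(A | B)`. -/
def condPr (n : ℕ) (q01 q11 q02 q12 q22 : ℝ)
    (A B : Finset (Sym2 (V n)) → Prop) : ℝ :=
  Pr n q01 q11 q02 q12 q22 (fun F => A F ∧ B F) / Pr n q01 q11 q02 q12 q22 B

/-- The two endpoints of an unordered pair, as a `Finset`. -/
def endpoints {n : ℕ} (ed : Sym2 (V n)) : Finset (V n) :=
  Sym2.lift ⟨fun a b => {a, b}, fun a b => Finset.pair_comm a b⟩ ed

/-- The set of complexes of a realization. -/
def complexes {n : ℕ} (F : Finset (Sym2 (V n))) : Finset (V n) :=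
  F.biUnion endpoints

/-- The undirected graph on the complexes of a realization, with edge set `F`. -/
def linkGraph {n : ℕ} (F : Finset (Sym2 (V n))) :
    SimpleGraph {y // y ∈ complexes F} where
  Adj a b := a ≠ b ∧ s((a : V n), (b : V n)) ∈ F
  symm := ⟨by
    intro a b h
    refine ⟨h.1.symm, ?_⟩
    rw [Sym2.eq_swap]
    exact h.2⟩
  loopless := ⟨fun a h => h.1 rfl⟩

/-- The number of linkage classes of a realization. -/
def numLC {n : ℕ} (F : Finset (Sym2 (V n))) : ℕ :=
  Nat.card (linkGraph F).ConnectedComponent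

/-- The dimension of the stoichiometric subspace of a realization. -/
def stoichDim {n : ℕ} (F : Finset (Sym2 (V n))) : ℕ :=
  Module.finrank ℝ (Submodule.span ℝ
    {d : Fin n → ℝ | ∃ a b : V n, s(a, b) ∈ F ∧ d = fun i => ((b i : ℝ) - (a i : ℝ))})

/-- The deficiency `δ(F) = |C(F)| - ℓ(F) - s(F)` of a realization. -/
def deficiency {n : ℕ} (F : Finset (Sym2 (V n))) : ℤ :=
  (complexes F).card - numLC F - stoichDim F

/-- `M_{i,j}`: the number of included pairs from a given class. -/
def Mcount {n : ℕ} (Eclass F : Finset (Sym2 (V n))) : ℕ :=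
  (F ∩ Eclass).card

/-- The expected number of included pairs from a class:
`K_{i,j}(n) = |E_n^{i,j}| ⬝ q_{i,j}(n)`. -/
def Kof (Ecl : (n : ℕ) → Finset (Sym2 (V n))) (q : ℕ → ℝ) (n : ℕ) : ℝ :=
  ((Ecl n).card : ℝ) * q n

/-- `a ≪ b` (equivalently `b ≫ a`): `b` is (eventually) positive and
`a n / b n → 0` as `n → ∞`. -/
def ll (a b : ℕ → ℝ) : Prop :=
  (∀ᶠ n in atTop, 0 < b n) ∧ Tendsto (fun n => a n / b n) atTop (nhds 0)

/-- The event `A_n`: every included pair from `E_n^{0,2}`, `E_n^{1,2}`,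
`E_n^{2,2}` involves the maximal number (2, 3, 4 respectively) of distinct
species. -/
def maxSpeciesEvent (n : ℕ) (F : Finset (Sym2 (V n))) : Prop :=
  (∀ ed ∈ F ∩ E02 n, ∃ a b : Fin n, a ≠ b ∧ ed = s((0 : V n), unit a + unit b)) ∧
  (∀ ed ∈ F ∩ E12 n, ∃ a b c : Fin n, a ≠ b ∧ a ≠ c ∧ b ≠ c ∧
    ed = s(unit a, unit b + unit c)) ∧
  (∀ ed ∈ F ∩ E22 n, ∃ a b c d : Fin n, a ≠ b ∧ a ≠ c ∧ a ≠ d ∧ b ≠ c ∧ b ≠ d ∧ c ≠ d ∧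
    ed = s(unit a + unit b, unit c + unit d))

/-- The conditioning event `⋂_{(i,j)} {M_{i,j}(n) = k_{i,j}}`. -/
def countEvent (n : ℕ) (k01 k11 k02 k12 k22 : ℕ) (F : Finset (Sym2 (V n))) : Prop :=
  Mcount (E01 n) F = k01 ∧ Mcount (E11 n) F = k11 ∧ Mcount (E02 n) F = k02 ∧
    Mcount (E12 n) F = k12 ∧ Mcount (E22 n) F = k22

section DegAux
open scoped Classical

variable {n : ℕ}

def deg (y : V n) : ℕ := ∑ i, y i

lemma deg_zero : deg (0 : V n) = 0 := by simp [deg]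

lemma deg_unit (a : Fin n) : deg (unit a) = 1 := by
  simp [deg, unit, Finset.sum_pi_single]

lemma deg_add (x y : V n) : deg (x + y) = deg x + deg y := by
  simp [deg, Finset.sum_add_distrib]

def ddeg : Sym2 (V n) → Multiset ℕ :=
  Sym2.lift ⟨fun a b => {deg a, deg b}, fun a b => Multiset.pair_comm _ _⟩

@[simp] lemma ddeg_mk (x y : V n) : ddeg s(x, y) = {deg x, deg y} := rfl

lemma ddeg_of_mem_E01 {ed : Sym2 (V n)} (h : ed ∈ E01 n) : ddeg ed = {0, 1} := by
  simp only [E01, Finset.mem_image] at h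
  obtain ⟨i, -, rfl⟩ := h
  simp [deg_zero, deg_unit]

lemma ddeg_of_mem_E11 {ed : Sym2 (V n)} (h : ed ∈ E11 n) : ddeg ed = {1, 1} := by
  simp only [E11, Finset.mem_image] at h
  obtain ⟨p, -, rfl⟩ := h
  simp [deg_unit]

lemma ddeg_of_mem_E02 {ed : Sym2 (V n)} (h : ed ∈ E02 n) : ddeg ed = {0, 2} := by
  simp only [E02, Finset.mem_image] at h
  obtain ⟨p, -, rfl⟩ := h
  simp [deg_zero, deg_add, deg_unit]

lemma ddeg_of_mem_E12 {ed : Sym2 (V n)} (h : ed ∈ E12 n) : ddeg ed = {1, 2} := by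
  simp only [E12, Finset.mem_image] at h
  obtain ⟨p, -, rfl⟩ := h
  simp [deg_add, deg_unit]

lemma ddeg_of_mem_E22 {ed : Sym2 (V n)} (h : ed ∈ E22 n) : ddeg ed = {2, 2} := by
  simp only [E22, Finset.mem_image] at h
  obtain ⟨p, -, rfl⟩ := h
  simp [deg_add, deg_unit]

lemma disjoint_of_ddeg {s t : Finset (Sym2 (V n))} {ms mt : Multiset ℕ}
    (hs : ∀ ed ∈ s, ddeg ed = ms) (ht : ∀ ed ∈ t, ddeg ed = mt) (h : ms ≠ mt) :
    Disjoint s t :=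
  Finset.disjoint_left.mpr fun ed hs' ht' => h (by rw [← hs ed hs', ht ed ht'])

lemma disj_01_11 : Disjoint (E01 n) (E11 n) :=
  disjoint_of_ddeg (fun _ => ddeg_of_mem_E01) (fun _ => ddeg_of_mem_E11) (by decide)
lemma disj_01_02 : Disjoint (E01 n) (E02 n) :=
  disjoint_of_ddeg (fun _ => ddeg_of_mem_E01) (fun _ => ddeg_of_mem_E02) (by decide)
lemma disj_01_12 : Disjoint (E01 n) (E12 n) :=
  disjoint_of_ddeg (fun _ => ddeg_of_mem_E01) (fun _ => ddeg_of_mem_E12) (by decide)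
lemma disj_01_22 : Disjoint (E01 n) (E22 n) :=
  disjoint_of_ddeg (fun _ => ddeg_of_mem_E01) (fun _ => ddeg_of_mem_E22) (by decide)
lemma disj_11_02 : Disjoint (E11 n) (E02 n) :=
  disjoint_of_ddeg (fun _ => ddeg_of_mem_E11) (fun _ => ddeg_of_mem_E02) (by decide)
lemma disj_11_12 : Disjoint (E11 n) (E12 n) :=
  disjoint_of_ddeg (fun _ => ddeg_of_mem_E11) (fun _ => ddeg_of_mem_E12) (by decide)
lemma disj_11_22 : Disjoint (E11 n) (E22 n) :=
  disjoint_of_ddeg (fun _ => ddeg_of_mem_E11) (fun _ => ddeg_of_mem_E22) (by decide)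
lemma disj_02_12 : Disjoint (E02 n) (E12 n) :=
  disjoint_of_ddeg (fun _ => ddeg_of_mem_E02) (fun _ => ddeg_of_mem_E12) (by decide)
lemma disj_02_22 : Disjoint (E02 n) (E22 n) :=
  disjoint_of_ddeg (fun _ => ddeg_of_mem_E02) (fun _ => ddeg_of_mem_E22) (by decide)
lemma disj_12_22 : Disjoint (E12 n) (E22 n) :=
  disjoint_of_ddeg (fun _ => ddeg_of_mem_E12) (fun _ => ddeg_of_mem_E22) (by decide)

variable (q01 q11 q02 q12 q22 : ℝ)

lemma qEdge_of_mem_E01 {ed : Sym2 (V n)} (h : ed ∈ E01 n) :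
    qEdge n q01 q11 q02 q12 q22 ed = q01 := by rw [qEdge, if_pos h]

lemma qEdge_of_mem_E11 {ed : Sym2 (V n)} (h : ed ∈ E11 n) :
    qEdge n q01 q11 q02 q12 q22 ed = q11 := by
  rw [qEdge, if_neg (fun h' => absurd (ddeg_of_mem_E01 h' ▸ ddeg_of_mem_E11 h) (by decide)),
    if_pos h]

lemma qEdge_of_mem_E02 {ed : Sym2 (V n)} (h : ed ∈ E02 n) :
    qEdge n q01 q11 q02 q12 q22 ed = q02 := by
  rw [qEdge, if_neg (fun h' => absurd (ddeg_of_mem_E01 h' ▸ ddeg_of_mem_E02 h) (by decide)),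
    if_neg (fun h' => absurd (ddeg_of_mem_E11 h' ▸ ddeg_of_mem_E02 h) (by decide)), if_pos h]

lemma qEdge_of_mem_E12 {ed : Sym2 (V n)} (h : ed ∈ E12 n) :
    qEdge n q01 q11 q02 q12 q22 ed = q12 := by
  rw [qEdge, if_neg (fun h' => absurd (ddeg_of_mem_E01 h' ▸ ddeg_of_mem_E12 h) (by decide)),
    if_neg (fun h' => absurd (ddeg_of_mem_E11 h' ▸ ddeg_of_mem_E12 h) (by decide)),
    if_neg (fun h' => absurd (ddeg_of_mem_E02 h' ▸ ddeg_of_mem_E12 h) (by decide)), if_pos h]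

lemma qEdge_of_mem_E22 {ed : Sym2 (V n)} (h : ed ∈ E22 n) :
    qEdge n q01 q11 q02 q12 q22 ed = q22 := by
  rw [qEdge, if_neg (fun h' => absurd (ddeg_of_mem_E01 h' ▸ ddeg_of_mem_E22 h) (by decide)),
    if_neg (fun h' => absurd (ddeg_of_mem_E11 h' ▸ ddeg_of_mem_E22 h) (by decide)),
    if_neg (fun h' => absurd (ddeg_of_mem_E02 h' ▸ ddeg_of_mem_E22 h) (by decide)),
    if_neg (fun h' => absurd (ddeg_of_mem_E12 h' ▸ ddeg_of_mem_E22 h) (by decide))]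

end DegAux
section Generic
open scoped Classical

/-- Factorization of a sum over subsets of a disjoint union. -/
lemma sum_powerset_union_mul {α : Type*} [DecidableEq α] {s t : Finset α} (hst : Disjoint s t)
    (f g : Finset α → ℝ) :
    ∑ F ∈ (s ∪ t).powerset, f (F ∩ s) * g (F ∩ t)
      = (∑ A ∈ s.powerset, f A) * (∑ B ∈ t.powerset, g B) := by
  rw [Finset.sum_mul_sum, ← Finset.sum_product']
  refine Finset.sum_nbij' (fun F => (F ∩ s, F ∩ t)) (fun p => p.1 ∪ p.2) ?_ ?_ ?_ ?_ ?_
  · intro F hF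
    simp only [Finset.mem_product, Finset.mem_powerset]
    exact ⟨Finset.inter_subset_right, Finset.inter_subset_right⟩
  · intro p hp
    simp only [Finset.mem_product, Finset.mem_powerset] at *
    exact Finset.union_subset_union hp.1 hp.2
  · intro F hF
    simp only [Finset.mem_powerset] at hF
    show F ∩ s ∪ F ∩ t = F
    rw [← Finset.inter_union_distrib_left, Finset.inter_eq_left.mpr hF]
  · intro p hp
    simp only [Finset.mem_product, Finset.mem_powerset] at hp
    have e1 : (p.1 ∪ p.2) ∩ s = p.1 := by
      rw [Finset.union_inter_distrib_right, Finset.inter_eq_left.mpr hp.1,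
        Finset.disjoint_iff_inter_eq_empty.mp (hst.symm.mono_left hp.2)]
      simp
    have e2 : (p.1 ∪ p.2) ∩ t = p.2 := by
      rw [Finset.union_inter_distrib_right, Finset.inter_eq_left.mpr hp.2,
        Finset.disjoint_iff_inter_eq_empty.mp (hst.mono_left hp.1)]
      simp
    show ((p.1 ∪ p.2) ∩ s, (p.1 ∪ p.2) ∩ t) = p
    rw [e1, e2]
  · intro F hF; rfl

set_option maxHeartbeats 1000000 in
lemma sum_powerset_mul5 {α : Type*} [DecidableEq α] {s1 s2 s3 s4 s5 : Finset α}
    (h12 : Disjoint s1 s2) (h13 : Disjoint s1 s3) (h14 : Disjoint s1 s4) (h15 : Disjoint s1 s5)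
    (h23 : Disjoint s2 s3) (h24 : Disjoint s2 s4) (h25 : Disjoint s2 s5)
    (h34 : Disjoint s3 s4) (h35 : Disjoint s3 s5) (h45 : Disjoint s4 s5)
    (f1 f2 f3 f4 f5 : Finset α → ℝ) :
    ∑ F ∈ (s1 ∪ s2 ∪ s3 ∪ s4 ∪ s5).powerset,
      f1 (F ∩ s1) * f2 (F ∩ s2) * f3 (F ∩ s3) * f4 (F ∩ s4) * f5 (F ∩ s5)
      = (∑ A ∈ s1.powerset, f1 A) * (∑ A ∈ s2.powerset, f2 A) * (∑ A ∈ s3.powerset, f3 A) *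
        (∑ A ∈ s4.powerset, f4 A) * (∑ A ∈ s5.powerset, f5 A) := by
  have key : ∀ (s u : Finset α), u ⊆ s → ∀ F : Finset α, F ∩ s ∩ u = F ∩ u := by
    intro s u hu F
    rw [Finset.inter_assoc, Finset.inter_eq_right.mpr hu]
  have H4 : Disjoint (s1 ∪ s2 ∪ s3 ∪ s4) s5 := by
    simp only [Finset.disjoint_union_left]; exact ⟨⟨⟨h15, h25⟩, h35⟩, h45⟩
  have H3 : Disjoint (s1 ∪ s2 ∪ s3) s4 := by
    simp only [Finset.disjoint_union_left]; exact ⟨⟨h14, h24⟩, h34⟩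
  have H2 : Disjoint (s1 ∪ s2) s3 := by
    simp only [Finset.disjoint_union_left]; exact ⟨h13, h23⟩
  have sub41 : s1 ⊆ s1 ∪ s2 ∪ s3 ∪ s4 :=
    (Finset.subset_union_left.trans Finset.subset_union_left).trans Finset.subset_union_left
  have sub42 : s2 ⊆ s1 ∪ s2 ∪ s3 ∪ s4 :=
    (Finset.subset_union_right.trans Finset.subset_union_left).trans Finset.subset_union_left
  have sub43 : s3 ⊆ s1 ∪ s2 ∪ s3 ∪ s4 := Finset.subset_union_right.trans Finset.subset_union_left
  have sub31 : s1 ⊆ s1 ∪ s2 ∪ s3 := Finset.subset_union_left.trans Finset.subset_union_left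
  have sub32 : s2 ⊆ s1 ∪ s2 ∪ s3 := Finset.subset_union_right.trans Finset.subset_union_left
  calc
    ∑ F ∈ (s1 ∪ s2 ∪ s3 ∪ s4 ∪ s5).powerset,
        f1 (F ∩ s1) * f2 (F ∩ s2) * f3 (F ∩ s3) * f4 (F ∩ s4) * f5 (F ∩ s5)
      = ∑ F ∈ ((s1 ∪ s2 ∪ s3 ∪ s4) ∪ s5).powerset,
        (fun G => f1 (G ∩ s1) * f2 (G ∩ s2) * f3 (G ∩ s3) * f4 (G ∩ s4))
          (F ∩ (s1 ∪ s2 ∪ s3 ∪ s4)) * f5 (F ∩ s5) := by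
        refine Finset.sum_congr rfl fun F _ => ?_
        simp only
        rw [key _ _ sub41, key _ _ sub42, key _ _ sub43,
          key _ _ Finset.subset_union_right]
    _ = (∑ G ∈ (s1 ∪ s2 ∪ s3 ∪ s4).powerset,
          f1 (G ∩ s1) * f2 (G ∩ s2) * f3 (G ∩ s3) * f4 (G ∩ s4)) *
        (∑ A ∈ s5.powerset, f5 A) := sum_powerset_union_mul H4 (fun G => f1 (G ∩ s1) * f2 (G ∩ s2) * f3 (G ∩ s3) * f4 (G ∩ s4)) f5
    _ = (∑ G ∈ ((s1 ∪ s2 ∪ s3) ∪ s4).powerset,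
          (fun G' => f1 (G' ∩ s1) * f2 (G' ∩ s2) * f3 (G' ∩ s3)) (G ∩ (s1 ∪ s2 ∪ s3)) *
            f4 (G ∩ s4)) * (∑ A ∈ s5.powerset, f5 A) := by
        congr 1
        refine Finset.sum_congr rfl fun F _ => ?_
        simp only
        rw [key _ _ sub31, key _ _ sub32, key _ _ Finset.subset_union_right]
    _ = ((∑ G ∈ (s1 ∪ s2 ∪ s3).powerset, f1 (G ∩ s1) * f2 (G ∩ s2) * f3 (G ∩ s3)) *
          (∑ A ∈ s4.powerset, f4 A)) * (∑ A ∈ s5.powerset, f5 A) :=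
        congrArg (· * (∑ A ∈ s5.powerset, f5 A)) (sum_powerset_union_mul H3 (fun G => f1 (G ∩ s1) * f2 (G ∩ s2) * f3 (G ∩ s3)) f4)
    _ = ((∑ G ∈ ((s1 ∪ s2) ∪ s3).powerset,
          (fun G' => f1 (G' ∩ s1) * f2 (G' ∩ s2)) (G ∩ (s1 ∪ s2)) * f3 (G ∩ s3)) *
          (∑ A ∈ s4.powerset, f4 A)) * (∑ A ∈ s5.powerset, f5 A) := by
        congr 2
        refine Finset.sum_congr rfl fun F _ => ?_
        simp only
        rw [key _ _ Finset.subset_union_left, key _ _ Finset.subset_union_right]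
    _ = (((∑ G ∈ (s1 ∪ s2).powerset, f1 (G ∩ s1) * f2 (G ∩ s2)) *
          (∑ A ∈ s3.powerset, f3 A)) * (∑ A ∈ s4.powerset, f4 A)) *
          (∑ A ∈ s5.powerset, f5 A) :=
        congrArg (fun x => x * (∑ A ∈ s4.powerset, f4 A) * (∑ A ∈ s5.powerset, f5 A))
          (sum_powerset_union_mul H2 (fun G => f1 (G ∩ s1) * f2 (G ∩ s2)) f3)
    _ = (∑ A ∈ s1.powerset, f1 A) * (∑ A ∈ s2.powerset, f2 A) * (∑ A ∈ s3.powerset, f3 A) *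
        (∑ A ∈ s4.powerset, f4 A) * (∑ A ∈ s5.powerset, f5 A) :=
        congrArg (fun x => x * (∑ A ∈ s3.powerset, f3 A) * (∑ A ∈ s4.powerset, f4 A) *
          (∑ A ∈ s5.powerset, f5 A)) (sum_powerset_union_mul h12 f1 f2)

end Generic
section ClassSum
open scoped Classical

/-- Per-class weighted sum over realizations. -/
noncomputable def cS {β : Type*} [DecidableEq β] (E : Finset β) (q : ℝ)
    (P : Finset β → Prop) : ℝ :=
  ∑ A ∈ E.powerset, if P A then q ^ A.card * (1 - q) ^ (E \ A).card else 0

lemma cS_count_aux {β : Type*} [DecidableEq β] (E : Finset β) (q : ℝ) (k : ℕ)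
    (P : Finset β → Prop) (G : Finset β) (hG : G ⊆ E)
    (hP : ∀ A ⊆ E, (P A ↔ A.card = k ∧ A ⊆ G)) :
    cS E q P = (G.card.choose k : ℝ) * (q ^ k * (1 - q) ^ (E.card - k)) := by
  classical
  rw [cS]
  have step1 : ∀ A ∈ E.powerset,
      (if P A then q ^ A.card * (1 - q) ^ (E \ A).card else 0)
      = (if A ∈ G.powersetCard k then (q ^ k * (1 - q) ^ (E.card - k)) else 0) := by
    intro A hA
    rw [Finset.mem_powerset] at hA
    by_cases h : P A
    · have h' := (hP A hA).mp h
      rw [if_pos h, if_pos (Finset.mem_powersetCard.mpr ⟨h'.2, h'.1⟩), h'.1,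
        Finset.card_sdiff_of_subset hA, h'.1]
    · rw [if_neg h, if_neg fun hmem => ?_]
      rw [Finset.mem_powersetCard] at hmem
      exact h ((hP A hA).mpr ⟨hmem.2, hmem.1⟩)
  rw [Finset.sum_congr rfl step1]
  rw [Finset.sum_ite_mem]
  have hinter : E.powerset ∩ G.powersetCard k = G.powersetCard k := by
    apply Finset.inter_eq_right.mpr
    intro A hA
    rw [Finset.mem_powersetCard] at hA
    exact Finset.mem_powerset.mpr (hA.1.trans hG)
  rw [hinter, Finset.sum_const, Finset.card_powersetCard, nsmul_eq_mul]

lemma cS_count {β : Type*} [DecidableEq β] (E : Finset β) (q : ℝ) (k : ℕ) :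
    cS E q (fun A => A.card = k) = (E.card.choose k : ℝ) * (q ^ k * (1 - q) ^ (E.card - k)) := by
  exact cS_count_aux E q k _ E le_rfl (fun A hA => by
    constructor
    · exact fun h => ⟨h, hA⟩
    · exact fun h => h.1)

lemma cS_count_filter {β : Type*} [DecidableEq β] (E : Finset β) (q : ℝ) (k : ℕ)
    (good : β → Prop) :
    cS E q (fun A => A.card = k ∧ ∀ ed ∈ A, good ed)
      = ((E.filter good).card.choose k : ℝ) * (q ^ k * (1 - q) ^ (E.card - k)) := by
  classical
  refine cS_count_aux E q k _ (E.filter good) (Finset.filter_subset _ _) (fun A hA => ?_)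
  simp only [Finset.subset_iff, Finset.mem_filter]
  constructor
  · rintro ⟨hk, hg⟩
    exact ⟨hk, fun x hx => ⟨hA hx, hg x hx⟩⟩
  · rintro ⟨hk, hg⟩
    exact ⟨hk, fun x hx => (hg hx).2⟩

/-- `∏ (1 - xᵢ) ≥ 1 - ∑ xᵢ` for `xᵢ ∈ [0, 1]`. -/
lemma one_sub_sum_le_prod {ι : Type*} (s : Finset ι) (x : ι → ℝ)
    (h0 : ∀ i ∈ s, 0 ≤ x i) (h1 : ∀ i ∈ s, x i ≤ 1) :
    1 - ∑ i ∈ s, x i ≤ ∏ i ∈ s, (1 - x i) := by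
  classical
  induction s using Finset.cons_induction with
  | empty => simp
  | cons a s ha ih =>
    rw [Finset.sum_cons, Finset.prod_cons]
    have h0' : ∀ i ∈ s, 0 ≤ x i := fun i hi => h0 i (Finset.mem_cons_of_mem hi)
    have h1' : ∀ i ∈ s, x i ≤ 1 := fun i hi => h1 i (Finset.mem_cons_of_mem hi)
    have ha0 : 0 ≤ x a := h0 a (Finset.mem_cons_self _ _)
    have ha1 : x a ≤ 1 := h1 a (Finset.mem_cons_self _ _)
    have hs0 : 0 ≤ ∑ i ∈ s, x i := Finset.sum_nonneg h0'
    have : (1 - x a) * (1 - ∑ i ∈ s, x i) ≤ (1 - x a) * ∏ i ∈ s, (1 - x i) :=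
      mul_le_mul_of_nonneg_left (ih h0' h1') (by linarith)
    nlinarith [this]

/-- The binomial-coefficient ratio lower bound. -/
lemma choose_ratio_ge (g m k : ℕ) (hk : k ≤ g) (hgm : g ≤ m) :
    1 - (k : ℝ) * ((m : ℝ) - g) / ((m : ℝ) - k) ≤ (g.choose k : ℝ) / (m.choose k : ℝ) := by
  rcases eq_or_lt_of_le hgm with rfl | hlt
  · rw [div_self (by exact_mod_cast (Nat.choose_pos hk).ne')]
    simp
  -- now g < m, so k < m
  have hkm : k < m := lt_of_le_of_lt hk hlt
  have hratio : (g.choose k : ℝ) / (m.choose k : ℝ)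
      = ∏ t ∈ Finset.range k, (((g : ℝ) - t) / ((m : ℝ) - t)) := by
    have hg' : (g.descFactorial k : ℝ) = ∏ t ∈ Finset.range k, ((g : ℝ) - t) := by
      rw [Nat.descFactorial_eq_prod_range, Nat.cast_prod]
      refine Finset.prod_congr rfl fun t ht => ?_
      rw [Finset.mem_range] at ht
      exact Nat.cast_sub (le_of_lt (lt_of_lt_of_le ht hk))
    have hm' : (m.descFactorial k : ℝ) = ∏ t ∈ Finset.range k, ((m : ℝ) - t) := by
      rw [Nat.descFactorial_eq_prod_range, Nat.cast_prod]
      refine Finset.prod_congr rfl fun t ht => ?_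
      rw [Finset.mem_range] at ht
      exact Nat.cast_sub (le_of_lt (lt_of_lt_of_le ht (le_of_lt hkm)))
    have e1 : (g.descFactorial k : ℝ) = (k.factorial : ℝ) * g.choose k := by
      exact_mod_cast congrArg (Nat.cast : ℕ → ℝ) (Nat.descFactorial_eq_factorial_mul_choose g k)
    have e2 : (m.descFactorial k : ℝ) = (k.factorial : ℝ) * m.choose k := by
      exact_mod_cast congrArg (Nat.cast : ℕ → ℝ) (Nat.descFactorial_eq_factorial_mul_choose m k)
    calc (g.choose k : ℝ) / (m.choose k : ℝ)
        = (g.descFactorial k : ℝ) / (m.descFactorial k : ℝ) := by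
          rw [e1, e2, mul_div_mul_left _ _ (by exact_mod_cast k.factorial_pos.ne' :
            (k.factorial : ℝ) ≠ 0)]
      _ = ∏ t ∈ Finset.range k, (((g : ℝ) - t) / ((m : ℝ) - t)) := by
          rw [hg', hm', Finset.prod_div_distrib]
  rw [hratio]
  have hfac : ∀ t ∈ Finset.range k, ((g:ℝ) - t) / ((m:ℝ) - t)
      = 1 - ((m:ℝ) - g) / ((m:ℝ) - t) := by
    intro t ht
    rw [Finset.mem_range] at ht
    have hmt : (0:ℝ) < (m:ℝ) - t := by
      have : (t:ℝ) < (m:ℝ) := by exact_mod_cast lt_trans ht hkm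
      linarith
    field_simp
    ring
  rw [Finset.prod_congr rfl hfac]
  have hx0 : ∀ t ∈ Finset.range k, (0:ℝ) ≤ ((m:ℝ) - g) / ((m:ℝ) - t) := by
    intro t ht
    rw [Finset.mem_range] at ht
    have hmt : (0:ℝ) < (m:ℝ) - t := by
      have : (t:ℝ) < (m:ℝ) := by exact_mod_cast lt_trans ht hkm
      linarith
    have : (0:ℝ) ≤ (m:ℝ) - g := by
      have : (g:ℝ) ≤ m := by exact_mod_cast hgm
      linarith
    positivity
  have hx1 : ∀ t ∈ Finset.range k, ((m:ℝ) - g) / ((m:ℝ) - t) ≤ 1 := by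
    intro t ht
    rw [Finset.mem_range] at ht
    have htg : (t:ℝ) < (g:ℝ) := by exact_mod_cast lt_of_lt_of_le ht hk
    have hmt : (0:ℝ) < (m:ℝ) - t := by
      have : (t:ℝ) < (m:ℝ) := by exact_mod_cast lt_trans ht hkm
      linarith
    rw [div_le_one hmt]
    linarith
  refine le_trans ?_ (one_sub_sum_le_prod _ _ hx0 hx1)
  have hsum : ∑ t ∈ Finset.range k, ((m:ℝ) - g) / ((m:ℝ) - t)
      ≤ (k:ℝ) * (((m:ℝ) - g) / ((m:ℝ) - k)) := by
    have hmk : (0:ℝ) < (m:ℝ) - k := by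
      have : (k:ℝ) < (m:ℝ) := by exact_mod_cast hkm
      linarith
    calc ∑ t ∈ Finset.range k, ((m:ℝ) - g) / ((m:ℝ) - t)
        ≤ ∑ _t ∈ Finset.range k, ((m:ℝ) - g) / ((m:ℝ) - k) := by
          refine Finset.sum_le_sum fun t ht => ?_
          rw [Finset.mem_range] at ht
          have hmt : (0:ℝ) < (m:ℝ) - t := by
            have : (t:ℝ) < (m:ℝ) := by exact_mod_cast lt_trans ht hkm
            linarith
          have hgm' : (g:ℝ) ≤ m := by exact_mod_cast hgm
          have htk : (t:ℝ) ≤ (k:ℝ) := by exact_mod_cast le_of_lt ht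
          apply div_le_div_of_nonneg_left (by linarith) hmk (by linarith)
      _ = (k:ℝ) * (((m:ℝ) - g) / ((m:ℝ) - k)) := by
          rw [Finset.sum_const, Finset.card_range, nsmul_eq_mul]
  rw [mul_div_assoc]
  linarith
end ClassSum
section Factor
open scoped Classical

variable {n : ℕ} {q01 q11 q02 q12 q22 : ℝ}

lemma probF_factor {F : Finset (Sym2 (V n))} (hF : F ⊆ allEdges n) :
    probF n q01 q11 q02 q12 q22 F
      = (q01 ^ (F ∩ E01 n).card * (1 - q01) ^ (E01 n \ (F ∩ E01 n)).card) *
        (q11 ^ (F ∩ E11 n).card * (1 - q11) ^ (E11 n \ (F ∩ E11 n)).card) *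
        (q02 ^ (F ∩ E02 n).card * (1 - q02) ^ (E02 n \ (F ∩ E02 n)).card) *
        (q12 ^ (F ∩ E12 n).card * (1 - q12) ^ (E12 n \ (F ∩ E12 n)).card) *
        (q22 ^ (F ∩ E22 n).card * (1 - q22) ^ (E22 n \ (F ∩ E22 n)).card) := by
  have d12 : Disjoint (F ∩ E01 n) (F ∩ E11 n) :=
    disj_01_11.mono Finset.inter_subset_right Finset.inter_subset_right
  have hFdec : F = F ∩ E01 n ∪ F ∩ E11 n ∪ F ∩ E02 n ∪ F ∩ E12 n ∪ F ∩ E22 n := by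
    conv_lhs => rw [← Finset.inter_eq_left.mpr hF]
    rw [allEdges, Finset.inter_union_distrib_left, Finset.inter_union_distrib_left,
      Finset.inter_union_distrib_left, Finset.inter_union_distrib_left]
  have hSdec : allEdges n \ F = (E01 n \ F) ∪ (E11 n \ F) ∪ (E02 n \ F) ∪ (E12 n \ F) ∪
      (E22 n \ F) := by
    rw [allEdges, Finset.union_sdiff_distrib, Finset.union_sdiff_distrib,
      Finset.union_sdiff_distrib, Finset.union_sdiff_distrib]
  have prodq : ∏ ed ∈ F, qEdge n q01 q11 q02 q12 q22 ed
      = q01 ^ (F ∩ E01 n).card * q11 ^ (F ∩ E11 n).card * q02 ^ (F ∩ E02 n).card *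
        q12 ^ (F ∩ E12 n).card * q22 ^ (F ∩ E22 n).card := by
    conv_lhs => rw [hFdec]
    rw [Finset.prod_union (by
        simp only [Finset.disjoint_union_left]
        exact ⟨⟨⟨disj_01_22.mono Finset.inter_subset_right Finset.inter_subset_right,
          disj_11_22.mono Finset.inter_subset_right Finset.inter_subset_right⟩,
          disj_02_22.mono Finset.inter_subset_right Finset.inter_subset_right⟩,
          disj_12_22.mono Finset.inter_subset_right Finset.inter_subset_right⟩),
      Finset.prod_union (by
        simp only [Finset.disjoint_union_left]
        exact ⟨⟨disj_01_12.mono Finset.inter_subset_right Finset.inter_subset_right,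
          disj_11_12.mono Finset.inter_subset_right Finset.inter_subset_right⟩,
          disj_02_12.mono Finset.inter_subset_right Finset.inter_subset_right⟩),
      Finset.prod_union (by
        simp only [Finset.disjoint_union_left]
        exact ⟨disj_01_02.mono Finset.inter_subset_right Finset.inter_subset_right,
          disj_11_02.mono Finset.inter_subset_right Finset.inter_subset_right⟩),
      Finset.prod_union d12]
    rw [Finset.prod_eq_pow_card (fun ed hed =>
        qEdge_of_mem_E01 q01 q11 q02 q12 q22 (Finset.mem_inter.mp hed).2),
      Finset.prod_eq_pow_card (fun ed hed =>
        qEdge_of_mem_E11 q01 q11 q02 q12 q22 (Finset.mem_inter.mp hed).2),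
      Finset.prod_eq_pow_card (fun ed hed =>
        qEdge_of_mem_E02 q01 q11 q02 q12 q22 (Finset.mem_inter.mp hed).2),
      Finset.prod_eq_pow_card (fun ed hed =>
        qEdge_of_mem_E12 q01 q11 q02 q12 q22 (Finset.mem_inter.mp hed).2),
      Finset.prod_eq_pow_card (fun ed hed =>
        qEdge_of_mem_E22 q01 q11 q02 q12 q22 (Finset.mem_inter.mp hed).2)]
  have prodq' : ∏ ed ∈ allEdges n \ F, (1 - qEdge n q01 q11 q02 q12 q22 ed)
      = (1 - q01) ^ (E01 n \ F).card * (1 - q11) ^ (E11 n \ F).card *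
        (1 - q02) ^ (E02 n \ F).card * (1 - q12) ^ (E12 n \ F).card *
        (1 - q22) ^ (E22 n \ F).card := by
    rw [hSdec]
    rw [Finset.prod_union (by
        simp only [Finset.disjoint_union_left]
        exact ⟨⟨⟨disj_01_22.mono Finset.sdiff_subset Finset.sdiff_subset,
          disj_11_22.mono Finset.sdiff_subset Finset.sdiff_subset⟩,
          disj_02_22.mono Finset.sdiff_subset Finset.sdiff_subset⟩,
          disj_12_22.mono Finset.sdiff_subset Finset.sdiff_subset⟩),
      Finset.prod_union (by
        simp only [Finset.disjoint_union_left]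
        exact ⟨⟨disj_01_12.mono Finset.sdiff_subset Finset.sdiff_subset,
          disj_11_12.mono Finset.sdiff_subset Finset.sdiff_subset⟩,
          disj_02_12.mono Finset.sdiff_subset Finset.sdiff_subset⟩),
      Finset.prod_union (by
        simp only [Finset.disjoint_union_left]
        exact ⟨disj_01_02.mono Finset.sdiff_subset Finset.sdiff_subset,
          disj_11_02.mono Finset.sdiff_subset Finset.sdiff_subset⟩),
      Finset.prod_union (disj_01_11.mono Finset.sdiff_subset Finset.sdiff_subset)]
    rw [Finset.prod_eq_pow_card (fun ed hed => by
        rw [qEdge_of_mem_E01 q01 q11 q02 q12 q22 (Finset.mem_sdiff.mp hed).1]),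
      Finset.prod_eq_pow_card (fun ed hed => by
        rw [qEdge_of_mem_E11 q01 q11 q02 q12 q22 (Finset.mem_sdiff.mp hed).1]),
      Finset.prod_eq_pow_card (fun ed hed => by
        rw [qEdge_of_mem_E02 q01 q11 q02 q12 q22 (Finset.mem_sdiff.mp hed).1]),
      Finset.prod_eq_pow_card (fun ed hed => by
        rw [qEdge_of_mem_E12 q01 q11 q02 q12 q22 (Finset.mem_sdiff.mp hed).1]),
      Finset.prod_eq_pow_card (fun ed hed => by
        rw [qEdge_of_mem_E22 q01 q11 q02 q12 q22 (Finset.mem_sdiff.mp hed).1])]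
  rw [probF, prodq, prodq', Finset.sdiff_inter_self_right, Finset.sdiff_inter_self_right,
    Finset.sdiff_inter_self_right, Finset.sdiff_inter_self_right,
    Finset.sdiff_inter_self_right]
  ring

lemma Pr_factor (P : Finset (Sym2 (V n)) → Prop)
    (P1 P2 P3 P4 P5 : Finset (Sym2 (V n)) → Prop)
    (hP : ∀ F, F ⊆ allEdges n → (P F ↔ P1 (F ∩ E01 n) ∧ P2 (F ∩ E11 n) ∧ P3 (F ∩ E02 n) ∧
      P4 (F ∩ E12 n) ∧ P5 (F ∩ E22 n))) :
    Pr n q01 q11 q02 q12 q22 P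
      = cS (E01 n) q01 P1 * cS (E11 n) q11 P2 * cS (E02 n) q02 P3 * cS (E12 n) q12 P4 *
        cS (E22 n) q22 P5 := by
  rw [Pr]
  have step : ∀ F ∈ (allEdges n).powerset,
      (if P F then probF n q01 q11 q02 q12 q22 F else 0)
      = (if P1 (F ∩ E01 n) then q01 ^ (F ∩ E01 n).card *
            (1 - q01) ^ (E01 n \ (F ∩ E01 n)).card else 0) *
        (if P2 (F ∩ E11 n) then q11 ^ (F ∩ E11 n).card *
            (1 - q11) ^ (E11 n \ (F ∩ E11 n)).card else 0) *
        (if P3 (F ∩ E02 n) then q02 ^ (F ∩ E02 n).card *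
            (1 - q02) ^ (E02 n \ (F ∩ E02 n)).card else 0) *
        (if P4 (F ∩ E12 n) then q12 ^ (F ∩ E12 n).card *
            (1 - q12) ^ (E12 n \ (F ∩ E12 n)).card else 0) *
        (if P5 (F ∩ E22 n) then q22 ^ (F ∩ E22 n).card *
            (1 - q22) ^ (E22 n \ (F ∩ E22 n)).card else 0) := by
    intro F hF
    rw [Finset.mem_powerset] at hF
    by_cases h1 : P1 (F ∩ E01 n)
    case neg =>
      rw [if_neg (fun h => h1 ((hP F hF).mp h).1), if_neg h1]
      ring
    by_cases h2 : P2 (F ∩ E11 n)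
    case neg =>
      rw [if_neg (fun h => h2 ((hP F hF).mp h).2.1), if_neg h2]
      ring
    by_cases h3 : P3 (F ∩ E02 n)
    case neg =>
      rw [if_neg (fun h => h3 ((hP F hF).mp h).2.2.1), if_neg h3]
      ring
    by_cases h4 : P4 (F ∩ E12 n)
    case neg =>
      rw [if_neg (fun h => h4 ((hP F hF).mp h).2.2.2.1), if_neg h4]
      ring
    by_cases h5 : P5 (F ∩ E22 n)
    case neg =>
      rw [if_neg (fun h => h5 ((hP F hF).mp h).2.2.2.2), if_neg h5]
      ring
    rw [if_pos ((hP F hF).mpr ⟨h1, h2, h3, h4, h5⟩), if_pos h1, if_pos h2, if_pos h3,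
      if_pos h4, if_pos h5, probF_factor hF]
  rw [Finset.sum_congr rfl step]
  exact sum_powerset_mul5 disj_01_11 disj_01_02 disj_01_12 disj_01_22 disj_11_02 disj_11_12
    disj_11_22 disj_02_12 disj_02_22 disj_12_22
    (fun A => if P1 A then q01 ^ A.card * (1 - q01) ^ (E01 n \ A).card else 0)
    (fun A => if P2 A then q11 ^ A.card * (1 - q11) ^ (E11 n \ A).card else 0)
    (fun A => if P3 A then q02 ^ A.card * (1 - q02) ^ (E02 n \ A).card else 0)
    (fun A => if P4 A then q12 ^ A.card * (1 - q12) ^ (E12 n \ A).card else 0)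
    (fun A => if P5 A then q22 ^ A.card * (1 - q22) ^ (E22 n \ A).card else 0)

end Factor
section PrValues
open scoped Classical

def good02 (n : ℕ) (ed : Sym2 (V n)) : Prop :=
  ∃ a b : Fin n, a ≠ b ∧ ed = s((0 : V n), unit a + unit b)
def good12 (n : ℕ) (ed : Sym2 (V n)) : Prop :=
  ∃ a b c : Fin n, a ≠ b ∧ a ≠ c ∧ b ≠ c ∧ ed = s(unit a, unit b + unit c)
def good22 (n : ℕ) (ed : Sym2 (V n)) : Prop :=
  ∃ a b c d : Fin n, a ≠ b ∧ a ≠ c ∧ a ≠ d ∧ b ≠ c ∧ b ≠ d ∧ c ≠ d ∧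
    ed = s(unit a + unit b, unit c + unit d)

noncomputable def G02 (n : ℕ) : Finset (Sym2 (V n)) := (E02 n).filter (good02 n)
noncomputable def G12 (n : ℕ) : Finset (Sym2 (V n)) := (E12 n).filter (good12 n)
noncomputable def G22 (n : ℕ) : Finset (Sym2 (V n)) := (E22 n).filter (good22 n)

variable {n : ℕ} {q01 q11 q02 q12 q22 : ℝ}

lemma Pr_count (k01 k11 k02 k12 k22 : ℕ) :
    Pr n q01 q11 q02 q12 q22 (countEvent n k01 k11 k02 k12 k22)
      = (((E01 n).card.choose k01 : ℝ) * (q01 ^ k01 * (1 - q01) ^ ((E01 n).card - k01))) *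
        (((E11 n).card.choose k11 : ℝ) * (q11 ^ k11 * (1 - q11) ^ ((E11 n).card - k11))) *
        (((E02 n).card.choose k02 : ℝ) * (q02 ^ k02 * (1 - q02) ^ ((E02 n).card - k02))) *
        (((E12 n).card.choose k12 : ℝ) * (q12 ^ k12 * (1 - q12) ^ ((E12 n).card - k12))) *
        (((E22 n).card.choose k22 : ℝ) * (q22 ^ k22 * (1 - q22) ^ ((E22 n).card - k22))) := by
  rw [Pr_factor (countEvent n k01 k11 k02 k12 k22) (fun A => A.card = k01)
      (fun A => A.card = k11) (fun A => A.card = k02)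
      (fun A => A.card = k12) (fun A => A.card = k22) (fun F _ => Iff.rfl),
    cS_count, cS_count, cS_count, cS_count, cS_count]

lemma Pr_max_count (k01 k11 k02 k12 k22 : ℕ) :
    Pr n q01 q11 q02 q12 q22
      (fun F => maxSpeciesEvent n F ∧ countEvent n k01 k11 k02 k12 k22 F)
      = (((E01 n).card.choose k01 : ℝ) * (q01 ^ k01 * (1 - q01) ^ ((E01 n).card - k01))) *
        (((E11 n).card.choose k11 : ℝ) * (q11 ^ k11 * (1 - q11) ^ ((E11 n).card - k11))) *
        (((G02 n).card.choose k02 : ℝ) * (q02 ^ k02 * (1 - q02) ^ ((E02 n).card - k02))) *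
        (((G12 n).card.choose k12 : ℝ) * (q12 ^ k12 * (1 - q12) ^ ((E12 n).card - k12))) *
        (((G22 n).card.choose k22 : ℝ) * (q22 ^ k22 * (1 - q22) ^ ((E22 n).card - k22))) := by
  rw [Pr_factor (fun F => maxSpeciesEvent n F ∧ countEvent n k01 k11 k02 k12 k22 F)
      (fun A => A.card = k01) (fun A => A.card = k11)
      (fun A => A.card = k02 ∧ ∀ ed ∈ A, good02 n ed)
      (fun A => A.card = k12 ∧ ∀ ed ∈ A, good12 n ed)
      (fun A => A.card = k22 ∧ ∀ ed ∈ A, good22 n ed)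
      (fun F _ =>
        ⟨fun h => ⟨h.2.1, h.2.2.1, ⟨h.2.2.2.1, h.1.1⟩, ⟨h.2.2.2.2.1, h.1.2.1⟩,
          ⟨h.2.2.2.2.2, h.1.2.2⟩⟩,
         fun h => ⟨⟨h.2.2.1.2, h.2.2.2.1.2, h.2.2.2.2.2⟩, h.1, h.2.1, h.2.2.1.1,
          h.2.2.2.1.1, h.2.2.2.2.1⟩⟩),
    cS_count, cS_count, cS_count_filter, cS_count_filter, cS_count_filter]
  rw [G02, G12, G22]

lemma condPr_eq (hq01 : q01 ∈ Set.Ioo (0:ℝ) 1) (hq11 : q11 ∈ Set.Ioo (0:ℝ) 1)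
    (hq02 : q02 ∈ Set.Ioo (0:ℝ) 1) (hq12 : q12 ∈ Set.Ioo (0:ℝ) 1)
    (hq22 : q22 ∈ Set.Ioo (0:ℝ) 1)
    (k01 k11 k02 k12 k22 : ℕ) (h01 : k01 ≤ (E01 n).card) (h11 : k11 ≤ (E11 n).card)
    (h02 : k02 ≤ (E02 n).card) (h12 : k12 ≤ (E12 n).card) (h22 : k22 ≤ (E22 n).card) :
    condPr n q01 q11 q02 q12 q22 (maxSpeciesEvent n) (countEvent n k01 k11 k02 k12 k22)
      = (((G02 n).card.choose k02 : ℝ) / ((E02 n).card.choose k02 : ℝ)) *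
        (((G12 n).card.choose k12 : ℝ) / ((E12 n).card.choose k12 : ℝ)) *
        (((G22 n).card.choose k22 : ℝ) / ((E22 n).card.choose k22 : ℝ)) := by
  have w1pos : (0:ℝ) < q01 ^ k01 * (1 - q01) ^ ((E01 n).card - k01) :=
    mul_pos (pow_pos hq01.1 _) (pow_pos (by linarith [hq01.2]) _)
  have w2pos : (0:ℝ) < q11 ^ k11 * (1 - q11) ^ ((E11 n).card - k11) :=
    mul_pos (pow_pos hq11.1 _) (pow_pos (by linarith [hq11.2]) _)
  have w3pos : (0:ℝ) < q02 ^ k02 * (1 - q02) ^ ((E02 n).card - k02) :=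
    mul_pos (pow_pos hq02.1 _) (pow_pos (by linarith [hq02.2]) _)
  have w4pos : (0:ℝ) < q12 ^ k12 * (1 - q12) ^ ((E12 n).card - k12) :=
    mul_pos (pow_pos hq12.1 _) (pow_pos (by linarith [hq12.2]) _)
  have w5pos : (0:ℝ) < q22 ^ k22 * (1 - q22) ^ ((E22 n).card - k22) :=
    mul_pos (pow_pos hq22.1 _) (pow_pos (by linarith [hq22.2]) _)
  have c1pos : (0:ℝ) < ((E01 n).card.choose k01 : ℝ) := by
    exact_mod_cast Nat.choose_pos h01
  have c2pos : (0:ℝ) < ((E11 n).card.choose k11 : ℝ) := by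
    exact_mod_cast Nat.choose_pos h11
  have c3pos : (0:ℝ) < ((E02 n).card.choose k02 : ℝ) := by
    exact_mod_cast Nat.choose_pos h02
  have c4pos : (0:ℝ) < ((E12 n).card.choose k12 : ℝ) := by
    exact_mod_cast Nat.choose_pos h12
  have c5pos : (0:ℝ) < ((E22 n).card.choose k22 : ℝ) := by
    exact_mod_cast Nat.choose_pos h22
  have hden : Pr n q01 q11 q02 q12 q22 (countEvent n k01 k11 k02 k12 k22) ≠ 0 := by
    rw [Pr_count]
    positivity
  rw [condPr, Pr_max_count, Pr_count, div_eq_iff (by positivity)]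
  rw [div_mul_div_comm, div_mul_div_comm, div_mul_eq_mul_div, eq_div_iff (by positivity)]
  ring
end PrValues
section Cards
open scoped Classical

variable {n : ℕ}

lemma unit_apply (a i : Fin n) : unit a i = if i = a then 1 else 0 := Pi.single_apply a 1 i

lemma unit_injective : Function.Injective (unit : Fin n → V n) := by
  intro a b h
  have h2 := congrFun h a
  rw [unit_apply, unit_apply, if_pos rfl] at h2
  split_ifs at h2 with h'
  · exact h'
  all_goals exact absurd h2 one_ne_zero

lemma sum_unit_ne_zero (a b : Fin n) : unit a + unit b ≠ 0 := by
  intro h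
  have h2 := congrFun h a
  rw [Pi.add_apply, Pi.zero_apply, unit_apply, unit_apply, if_pos rfl] at h2
  split_ifs at h2 <;> omega

/-- The degree-2 complex associated to an unordered pair of species. -/
def sig (n : ℕ) : Sym2 (Fin n) → V n :=
  Sym2.lift ⟨fun a b => unit a + unit b, fun a b => add_comm _ _⟩

@[simp] lemma sig_mk (a b : Fin n) : sig n s(a, b) = unit a + unit b := rfl

lemma deg_sig (z : Sym2 (Fin n)) : deg (sig n z) = 2 := by
  induction z using Sym2.ind with
  | _ a b => simp [deg_add, deg_unit]

lemma sig_ne_zero (z : Sym2 (Fin n)) : sig n z ≠ 0 := by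
  induction z using Sym2.ind with
  | _ a b => exact sum_unit_ne_zero a b

lemma unit_ne_sig (a : Fin n) (z : Sym2 (Fin n)) : unit a ≠ sig n z := by
  intro h
  have := congrArg deg h
  rw [deg_unit, deg_sig] at this
  omega

lemma sum_unit_eq {a b c d : Fin n} (h : unit a + unit b = unit c + unit d) :
    s(a, b) = s(c, d) := by
  by_cases hac : a = c
  · subst hac
    have : unit b = unit d := add_left_cancel h
    rw [unit_injective this]
  · have h1 := congrFun h a
    rw [Pi.add_apply, Pi.add_apply, unit_apply, unit_apply, unit_apply, unit_apply,
      if_pos rfl, if_neg hac] at h1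
    have hda : d = a := by
      by_contra hda
      rw [if_neg (show ¬(a = d) from fun h' => hda h'.symm)] at h1
      split_ifs at h1 <;> omega
    rw [hda] at h
    have hbc : unit b = unit c := by
      have h' : unit a + unit b = unit a + unit c := by
        rw [h, add_comm]
      exact add_left_cancel h'
    rw [unit_injective hbc, hda, Sym2.eq_swap]

lemma sig_injective : Function.Injective (sig n) := by
  intro z w h
  refine Sym2.inductionOn₂ z w (f := fun z w => sig n z = sig n w → z = w) ?_ h
  intro a b c d h'
  exact sum_unit_eq h'

/-- `E02` as the image of an injective map. -/
lemma E02_eq : E02 n = Finset.univ.image (fun z : Sym2 (Fin n) => s((0 : V n), sig n z)) := by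
  ext ed
  simp only [E02, Finset.mem_image, Finset.mem_product, Finset.mem_univ, true_and,
    and_true, Prod.exists]
  constructor
  · rintro ⟨a, b, h⟩
    exact ⟨s(a, b), h⟩
  · rintro ⟨z, h⟩
    revert h
    induction z using Sym2.ind with
    | _ a b => exact fun h => ⟨a, b, h⟩

lemma card_E02 : (E02 n).card = Fintype.card (Sym2 (Fin n)) := by
  rw [E02_eq, Finset.card_image_of_injective _ ?_, Finset.card_univ]
  intro z w h
  rw [Sym2.eq_iff] at h
  rcases h with ⟨-, h2⟩ | ⟨h1, -⟩
  · exact sig_injective h2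
  · exact absurd h1.symm (sig_ne_zero w)

lemma bad02_le : (E02 n \ G02 n).card ≤ n := by
  have hsub : E02 n \ G02 n ⊆ Finset.univ.image (fun i : Fin n => s((0 : V n), unit i + unit i)) := by
    intro ed hed
    rw [Finset.mem_sdiff] at hed
    obtain ⟨hE, hG⟩ := hed
    have hE' := hE
    simp only [E02, Finset.mem_image, Finset.mem_product, Prod.exists] at hE'
    obtain ⟨a, b, -, rfl⟩ := hE'
    by_cases hab : a = b
    · subst hab
      exact Finset.mem_image.mpr ⟨a, Finset.mem_univ a, rfl⟩
    · exact absurd (Finset.mem_filter.mpr ⟨hE, ⟨a, b, hab, rfl⟩⟩) hG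
  calc (E02 n \ G02 n).card ≤ _ := Finset.card_le_card hsub
    _ ≤ Finset.univ.card := Finset.card_image_le
    _ = n := by simp

/-- `E12` as the image of an injective map. -/
lemma E12_eq : E12 n
    = Finset.univ.image (fun p : Fin n × Sym2 (Fin n) => s(unit p.1, sig n p.2)) := by
  ext ed
  simp only [E12, Finset.mem_image, Finset.mem_product, Finset.mem_univ, true_and,
    and_true, Prod.exists]
  constructor
  · rintro ⟨i, a, b, h⟩
    exact ⟨i, s(a, b), h⟩
  · rintro ⟨i, z, h⟩
    revert h
    induction z using Sym2.ind with
    | _ a b => exact fun h => ⟨i, a, b, h⟩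

lemma card_E12 : (E12 n).card = Fintype.card (Fin n × Sym2 (Fin n)) := by
  rw [E12_eq, Finset.card_image_of_injective _ ?_, Finset.card_univ]
  intro z w h
  rw [Sym2.eq_iff] at h
  rcases h with ⟨h1, h2⟩ | ⟨h1, -⟩
  · exact Prod.ext (unit_injective h1) (sig_injective h2)
  · exact absurd h1 (unit_ne_sig _ _)

lemma bad12_le : (E12 n \ G12 n).card ≤ n * n + n * n := by
  have hsub : E12 n \ G12 n ⊆
      Finset.univ.image (fun p : Fin n × Fin n => s(unit p.1, unit p.2 + unit p.2)) ∪
      Finset.univ.image (fun p : Fin n × Fin n => s(unit p.1, unit p.1 + unit p.2)) := by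
    intro ed hed
    rw [Finset.mem_sdiff] at hed
    obtain ⟨hE, hG⟩ := hed
    have hE' := hE
    simp only [E12, Finset.mem_image, Finset.mem_product, Prod.exists] at hE'
    obtain ⟨i, a, b, -, rfl⟩ := hE'
    rw [Finset.mem_union]
    by_cases hab : a = b
    · subst hab
      exact Or.inl (Finset.mem_image.mpr ⟨(i, a), Finset.mem_univ _, rfl⟩)
    by_cases hia : i = a
    · subst hia
      exact Or.inr (Finset.mem_image.mpr ⟨(i, b), Finset.mem_univ _, rfl⟩)
    by_cases hib : i = b
    · subst hib
      refine Or.inr (Finset.mem_image.mpr ⟨(i, a), Finset.mem_univ _, ?_⟩)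
      rw [add_comm (unit a)]
    · exact absurd (Finset.mem_filter.mpr ⟨hE, ⟨i, a, b, hia, hib, hab, rfl⟩⟩) hG
  calc (E12 n \ G12 n).card ≤ _ := Finset.card_le_card hsub
    _ ≤ _ := Finset.card_union_le _ _
    _ ≤ n * n + n * n := by
        gcongr <;> calc _ ≤ (Finset.univ : Finset (Fin n × Fin n)).card :=
            Finset.card_image_le
          _ = n * n := by simp

/-- `E22` as the image of an injective map. -/
lemma E22_eq : E22 n = ((Finset.univ : Finset (Sym2 (Sym2 (Fin n)))).filter
    (fun z => ¬ z.IsDiag)).image (Sym2.map (sig n)) := by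
  ext ed
  constructor
  · intro hE
    simp only [E22, Finset.mem_image, Finset.mem_filter, Finset.mem_product, Finset.mem_univ,
      true_and, Prod.exists] at hE
    obtain ⟨a, b, c, d, hne, rfl⟩ := hE
    refine Finset.mem_image.mpr ⟨s(s(a, b), s(c, d)), ?_, by rw [Sym2.map_pair_eq]; rfl⟩
    rw [Finset.mem_filter]
    refine ⟨Finset.mem_univ _, ?_⟩
    rw [Sym2.mk_isDiag_iff]
    exact fun hh => hne (congrArg (sig n) hh)
  · intro hI
    obtain ⟨z, hz, rfl⟩ := Finset.mem_image.mp hI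
    rw [Finset.mem_filter] at hz
    have key : ∀ z : Sym2 (Sym2 (Fin n)), ¬ z.IsDiag → Sym2.map (sig n) z ∈ E22 n := by
      intro z
      induction z using Sym2.ind with
      | _ w1 w2 =>
        induction w1 using Sym2.ind with
        | _ a b =>
          induction w2 using Sym2.ind with
          | _ c d =>
            intro hdiag
            rw [Sym2.mk_isDiag_iff] at hdiag
            simp only [E22, Finset.mem_image, Finset.mem_filter, Finset.mem_product,
              Finset.mem_univ, true_and, Prod.exists]
            refine ⟨a, b, c, d, fun h => hdiag (sum_unit_eq h), ?_⟩
            rw [Sym2.map_pair_eq]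
            rfl
    exact key z hz.2

lemma card_E22 : (E22 n).card = (Fintype.card (Sym2 (Fin n))).choose 2 := by
  rw [E22_eq, Finset.card_image_of_injective _ (Sym2.map.injective sig_injective),
    ← Fintype.card_subtype, Sym2.card_subtype_not_diag]

noncomputable def psi1 (n : ℕ) (p : Fin n × Sym2 (Fin n)) : Sym2 (V n) :=
  Sym2.lift ⟨fun y z => s(unit p.1 + unit y, unit p.1 + unit z),
    fun y z => Sym2.eq_swap⟩ p.2

lemma bad22_le : (E22 n \ G22 n).card ≤ n * Fintype.card (Sym2 (Fin n)) +
    n * Fintype.card (Sym2 (Fin n)) := by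
  have hsub : E22 n \ G22 n ⊆
      Finset.univ.image (psi1 n) ∪
      Finset.univ.image (fun p : Fin n × Sym2 (Fin n) => s(unit p.1 + unit p.1, sig n p.2)) := by
    intro ed hed
    rw [Finset.mem_sdiff] at hed
    obtain ⟨hE, hG⟩ := hed
    have hE' := hE
    simp only [E22, Finset.mem_image, Finset.mem_filter, Finset.mem_product, Prod.exists] at hE'
    obtain ⟨a, b, c, d, -, rfl⟩ := hE'
    rw [Finset.mem_union]
    by_cases hab : a = b
    · subst hab
      exact Or.inr (Finset.mem_image.mpr ⟨(a, s(c, d)), Finset.mem_univ _, rfl⟩)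
    by_cases hcd : c = d
    · subst hcd
      refine Or.inr (Finset.mem_image.mpr ⟨(c, s(a, b)), Finset.mem_univ _, ?_⟩)
      rw [Sym2.eq_swap]
      rfl
    by_cases hac : a = c
    · subst hac
      exact Or.inl (Finset.mem_image.mpr ⟨(a, s(b, d)), Finset.mem_univ _, rfl⟩)
    by_cases had : a = d
    · subst had
      refine Or.inl (Finset.mem_image.mpr ⟨(a, s(b, c)), Finset.mem_univ _, ?_⟩)
      show s(unit a + unit b, unit a + unit c) = s(unit a + unit b, unit c + unit a)
      rw [add_comm (unit c)]
    by_cases hbc : b = c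
    · subst hbc
      refine Or.inl (Finset.mem_image.mpr ⟨(b, s(a, d)), Finset.mem_univ _, ?_⟩)
      show s(unit b + unit a, unit b + unit d) = s(unit a + unit b, unit b + unit d)
      rw [add_comm (unit b)]
    by_cases hbd : b = d
    · subst hbd
      refine Or.inl (Finset.mem_image.mpr ⟨(b, s(a, c)), Finset.mem_univ _, ?_⟩)
      show s(unit b + unit a, unit b + unit c) = s(unit a + unit b, unit c + unit b)
      rw [add_comm (unit b), add_comm (unit b)]
    · exact absurd (Finset.mem_filter.mpr
        ⟨hE, ⟨a, b, c, d, hab, hac, had, hbc, hbd, hcd, rfl⟩⟩) hG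
  calc (E22 n \ G22 n).card ≤ _ := Finset.card_le_card hsub
    _ ≤ _ := Finset.card_union_le _ _
    _ ≤ _ := by
        gcongr <;> calc _ ≤ (Finset.univ : Finset (Fin n × Sym2 (Fin n))).card :=
            Finset.card_image_le
          _ = n * Fintype.card (Sym2 (Fin n)) := by
              rw [Finset.card_univ, Fintype.card_prod, Fintype.card_fin]

end Cards
section Final
open scoped Classical

variable {n : ℕ}

lemma sym2_card_real : ((Fintype.card (Sym2 (Fin n)) : ℝ)) = n * (n + 1) / 2 := by
  rw [Sym2.card, Fintype.card_fin, Nat.cast_choose_two]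
  push_cast
  ring

lemma card_E02_real : ((E02 n).card : ℝ) = n * (n + 1) / 2 := by
  rw [card_E02, sym2_card_real]

lemma card_E12_real : ((E12 n).card : ℝ) = n * (n * (n + 1) / 2) := by
  rw [card_E12, Fintype.card_prod, Fintype.card_fin]
  push_cast [sym2_card_real]
  ring

lemma card_E22_real : ((E22 n).card : ℝ)
    = (n * (n + 1) / 2) * ((n * (n + 1) / 2) - 1) / 2 := by
  rw [card_E22, Nat.cast_choose_two, sym2_card_real]

lemma bad02_le_real : ((E02 n \ G02 n).card : ℝ) ≤ n := by
  exact_mod_cast bad02_le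

lemma bad12_le_real : ((E12 n \ G12 n).card : ℝ) ≤ 2 * (n : ℝ) * n := by
  have h : ((E12 n \ G12 n).card : ℝ) ≤ ((n * n + n * n : ℕ) : ℝ) := by
    exact_mod_cast bad12_le
  push_cast at h
  linarith

lemma bad22_le_real : ((E22 n \ G22 n).card : ℝ) ≤ (n : ℝ) * n * (n + 1) := by
  have h : ((E22 n \ G22 n).card : ℝ)
      ≤ ((n * Fintype.card (Sym2 (Fin n)) + n * Fintype.card (Sym2 (Fin n)) : ℕ) : ℝ) := by
    exact_mod_cast bad22_le
  push_cast [sym2_card_real] at h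
  linarith

lemma g02_real : ((G02 n).card : ℝ) = ((E02 n).card : ℝ) - ((E02 n \ G02 n).card : ℝ) := by
  have h1 : (E02 n \ G02 n).card = (E02 n).card - (G02 n).card :=
    Finset.card_sdiff_of_subset (Finset.filter_subset _ _)
  have h2 : (G02 n).card ≤ (E02 n).card := Finset.card_filter_le _ _
  have h3 : (G02 n).card + (E02 n \ G02 n).card = (E02 n).card := by omega
  push_cast [← h3]
  ring

lemma g12_real : ((G12 n).card : ℝ) = ((E12 n).card : ℝ) - ((E12 n \ G12 n).card : ℝ) := by
  have h1 : (E12 n \ G12 n).card = (E12 n).card - (G12 n).card :=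
    Finset.card_sdiff_of_subset (Finset.filter_subset _ _)
  have h2 : (G12 n).card ≤ (E12 n).card := Finset.card_filter_le _ _
  have h3 : (G12 n).card + (E12 n \ G12 n).card = (E12 n).card := by omega
  push_cast [← h3]
  ring

lemma g22_real : ((G22 n).card : ℝ) = ((E22 n).card : ℝ) - ((E22 n \ G22 n).card : ℝ) := by
  have h1 : (E22 n \ G22 n).card = (E22 n).card - (G22 n).card :=
    Finset.card_sdiff_of_subset (Finset.filter_subset _ _)
  have h2 : (G22 n).card ≤ (E22 n).card := Finset.card_filter_le _ _
  have h3 : (G22 n).card + (E22 n \ G22 n).card = (E22 n).card := by omega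
  push_cast [← h3]
  ring

lemma class_ratio_bound (g m b k : ℕ) (hgb : (g : ℝ) = (m : ℝ) - (b : ℝ)) (hk : k ≤ g)
    (hkm : (k : ℝ) < (m : ℝ)) (Q c nr : ℝ) (hQk : (k : ℝ) ≤ Q) (hQpos : 0 < Q)
    (hnr : 0 < nr) (harith : (b : ℝ) * nr ≤ c * ((m : ℝ) - (k : ℝ))) :
    1 - c * Q / nr ≤ (g.choose k : ℝ) / (m.choose k : ℝ) ∧
      (g.choose k : ℝ) / (m.choose k : ℝ) ≤ 1 := by
  have hgm : g ≤ m := by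
    have hb0 : (0:ℝ) ≤ (b:ℝ) := Nat.cast_nonneg b
    have : (g : ℝ) ≤ (m : ℝ) := by rw [hgb]; linarith
    exact_mod_cast this
  constructor
  · refine le_trans ?_ (choose_ratio_ge g m k hk hgm)
    have hmg : (m : ℝ) - (g : ℝ) = (b : ℝ) := by rw [hgb]; ring
    rw [hmg]
    have hmk : (0:ℝ) < (m : ℝ) - k := by linarith
    have h1 : (k : ℝ) * (b : ℝ) / ((m : ℝ) - k) ≤ c * Q / nr := by
      rw [div_le_div_iff₀ hmk hnr]
      have hbnr : (0:ℝ) ≤ (b : ℝ) * nr := mul_nonneg (Nat.cast_nonneg b) (le_of_lt hnr)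
      have h2 : (k : ℝ) * ((b : ℝ) * nr) ≤ Q * ((b : ℝ) * nr) :=
        mul_le_mul_of_nonneg_right hQk hbnr
      have h3 : Q * ((b : ℝ) * nr) ≤ Q * (c * ((m : ℝ) - k)) :=
        mul_le_mul_of_nonneg_left harith (le_of_lt hQpos)
      nlinarith [h2, h3]
    linarith
  · rw [div_le_one (by exact_mod_cast Nat.choose_pos (hk.trans hgm))]
    exact_mod_cast Nat.choose_le_choose k hgm

end Final

set_option maxHeartbeats 4000000 in
/-- Conditioned on the reaction counts `M_{i,j}(n) = k_{i,j}(n)`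
with `k_{i,j}(n) ≤ Q_{i,j}(n) ≪ n` for the classes `(0,2), (1,2), (2,2)`, the
probability that every realized reaction has the maximal number of distinct
species tends to one, with the explicit lower bound
`(1 - 2Q_{0,2}(n)/n)(1 - 4Q_{1,2}(n)/n)(1 - 8Q_{2,2}(n)/n)` eventually. -/
theorem condProb_maxSpecies_tendsto_one
    (q01 q11 q02 q12 q22 : ℕ → ℝ)
    (hq : ∀ n, q01 n ∈ Set.Ioo (0 : ℝ) 1 ∧ q11 n ∈ Set.Ioo (0 : ℝ) 1 ∧
      q02 n ∈ Set.Ioo (0 : ℝ) 1 ∧ q12 n ∈ Set.Ioo (0 : ℝ) 1 ∧ q22 n ∈ Set.Ioo (0 : ℝ) 1)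
    (Q02 Q12 Q22 : ℕ → ℝ)
    (hQpos : ∀ n, 0 < Q02 n ∧ 0 < Q12 n ∧ 0 < Q22 n)
    (hQ02 : ll Q02 (fun n => (n : ℝ))) (hQ12 : ll Q12 (fun n => (n : ℝ)))
    (hQ22 : ll Q22 (fun n => (n : ℝ)))
    (k01 k11 k02 k12 k22 : ℕ → ℕ)
    (hk02 : ∀ n, (k02 n : ℝ) ≤ Q02 n) (hk12 : ∀ n, (k12 n : ℝ) ≤ Q12 n)
    (hk22 : ∀ n, (k22 n : ℝ) ≤ Q22 n)
    (hcard : ∀ n, k01 n ≤ (E01 n).card ∧ k11 n ≤ (E11 n).card ∧ k02 n ≤ (E02 n).card ∧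
      k12 n ≤ (E12 n).card ∧ k22 n ≤ (E22 n).card) :
    Tendsto (fun n => condPr n (q01 n) (q11 n) (q02 n) (q12 n) (q22 n)
        (maxSpeciesEvent n) (countEvent n (k01 n) (k11 n) (k02 n) (k12 n) (k22 n)))
      atTop (nhds 1) ∧
    ∀ᶠ n in atTop,
      (1 - 2 * Q02 n / n) * (1 - 4 * Q12 n / n) * (1 - 8 * Q22 n / n) ≤
        condPr n (q01 n) (q11 n) (q02 n) (q12 n) (q22 n)
          (maxSpeciesEvent n) (countEvent n (k01 n) (k11 n) (k02 n) (k12 n) (k22 n)) := by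

  classical
  have hcond : ∀ n : ℕ, condPr n (q01 n) (q11 n) (q02 n) (q12 n) (q22 n)
      (maxSpeciesEvent n) (countEvent n (k01 n) (k11 n) (k02 n) (k12 n) (k22 n))
      = (((G02 n).card.choose (k02 n) : ℝ) / ((E02 n).card.choose (k02 n) : ℝ)) *
        (((G12 n).card.choose (k12 n) : ℝ) / ((E12 n).card.choose (k12 n) : ℝ)) *
        (((G22 n).card.choose (k22 n) : ℝ) / ((E22 n).card.choose (k22 n) : ℝ)) := by
    intro n
    obtain ⟨h1, h2, h3, h4, h5⟩ := hq n
    obtain ⟨c1, c2, c3, c4, c5⟩ := hcard n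
    exact condPr_eq h1 h2 h3 h4 h5 _ _ _ _ _ c1 c2 c3 c4 c5
  have hev : ∀ᶠ n : ℕ in atTop,
      (1 - 2 * Q02 n / n) * (1 - 4 * Q12 n / n) * (1 - 8 * Q22 n / n) ≤
        condPr n (q01 n) (q11 n) (q02 n) (q12 n) (q22 n)
          (maxSpeciesEvent n) (countEvent n (k01 n) (k11 n) (k02 n) (k12 n) (k22 n)) ∧
      condPr n (q01 n) (q11 n) (q02 n) (q12 n) (q22 n)
          (maxSpeciesEvent n) (countEvent n (k01 n) (k11 n) (k02 n) (k12 n) (k22 n)) ≤ 1 := by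
    have e0 : ∀ᶠ n : ℕ in atTop, (16 : ℝ) ≤ n := by
      filter_upwards [eventually_ge_atTop 16] with n hn
      exact_mod_cast hn
    have e1 : ∀ᶠ n : ℕ in atTop, Q02 n / n < 1/16 :=
      hQ02.2.eventually_lt_const (by norm_num)
    have e2 : ∀ᶠ n : ℕ in atTop, Q12 n / n < 1/16 :=
      hQ12.2.eventually_lt_const (by norm_num)
    have e3 : ∀ᶠ n : ℕ in atTop, Q22 n / n < 1/16 :=
      hQ22.2.eventually_lt_const (by norm_num)
    filter_upwards [e0, e1, e2, e3] with n hn h1 h2 h3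
    have hN0 : (0:ℝ) < (n:ℝ) := by linarith
    have hQ2 : Q02 n ≤ (n:ℝ)/16 := by
      have := (div_lt_iff₀ hN0).mp h1; linarith
    have hQ4 : Q12 n ≤ (n:ℝ)/16 := by
      have := (div_lt_iff₀ hN0).mp h2; linarith
    have hQ5 : Q22 n ≤ (n:ℝ)/16 := by
      have := (div_lt_iff₀ hN0).mp h3; linarith
    have hk2 : (k02 n : ℝ) ≤ (n:ℝ)/16 := le_trans (hk02 n) hQ2
    have hk4 : (k12 n : ℝ) ≤ (n:ℝ)/16 := le_trans (hk12 n) hQ4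
    have hk5 : (k22 n : ℝ) ≤ (n:ℝ)/16 := le_trans (hk22 n) hQ5
    have hknn2 : (0:ℝ) ≤ (k02 n : ℝ) := Nat.cast_nonneg _
    have hknn4 : (0:ℝ) ≤ (k12 n : ℝ) := Nat.cast_nonneg _
    have hknn5 : (0:ℝ) ≤ (k22 n : ℝ) := Nat.cast_nonneg _
    have hsq : (16:ℝ) * (n:ℝ) ≤ (n:ℝ) * n := by nlinarith
    have hcube : (16:ℝ) * ((n:ℝ) * n) ≤ (n:ℝ) * n * n := by nlinarith
    have hquad : (16:ℝ) * ((n:ℝ) * n * n) ≤ (n:ℝ) * n * n * n := by nlinarith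
    -- class (0,2)
    have hb3 := bad02_le_real (n := n)
    have hb3nn : (0:ℝ) ≤ ((E02 n \ G02 n).card : ℝ) := Nat.cast_nonneg _
    have hkm3 : ((k02 n : ℝ)) < ((E02 n).card : ℝ) := by
      rw [card_E02_real]; nlinarith
    have hkg3 : k02 n ≤ (G02 n).card := by
      have : ((k02 n : ℝ)) ≤ ((G02 n).card : ℝ) := by
        rw [g02_real, card_E02_real]; nlinarith
      exact_mod_cast this
    have harith3 : ((E02 n \ G02 n).card : ℝ) * n ≤ 2 * (((E02 n).card : ℝ) - k02 n) := by
      rw [card_E02_real]; nlinarith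
    have hbd3 := class_ratio_bound _ _ _ _ g02_real hkg3 hkm3 (Q02 n) 2 n (hk02 n)
      (hQpos n).1 hN0 harith3
    -- class (1,2)
    have hb4 := bad12_le_real (n := n)
    have hb4nn : (0:ℝ) ≤ ((E12 n \ G12 n).card : ℝ) := Nat.cast_nonneg _
    have hkm4 : ((k12 n : ℝ)) < ((E12 n).card : ℝ) := by
      rw [card_E12_real]; nlinarith [hk4, hsq, hcube, hn, hN0]
    have hkg4 : k12 n ≤ (G12 n).card := by
      have : ((k12 n : ℝ)) ≤ ((G12 n).card : ℝ) := by
        rw [g12_real, card_E12_real]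
        nlinarith [hb4, hk4, hsq, hcube, hn, hN0]
      exact_mod_cast this
    have hb4N : ((E12 n \ G12 n).card : ℝ) * n ≤ (2 * (n:ℝ) * n) * n :=
      mul_le_mul_of_nonneg_right hb4 hN0.le
    have harith4 : ((E12 n \ G12 n).card : ℝ) * n ≤ 4 * (((E12 n).card : ℝ) - k12 n) := by
      rw [card_E12_real]; nlinarith [hb4N, hk4, hsq, hcube, hn, hN0]
    have hbd4 := class_ratio_bound _ _ _ _ g12_real hkg4 hkm4 (Q12 n) 4 n (hk12 n)
      (hQpos n).2.1 hN0 harith4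
    -- class (2,2)
    have hb5 := bad22_le_real (n := n)
    have hb5nn : (0:ℝ) ≤ ((E22 n \ G22 n).card : ℝ) := Nat.cast_nonneg _
    have hkm5 : ((k22 n : ℝ)) < ((E22 n).card : ℝ) := by
      rw [card_E22_real]; nlinarith [hk5, hsq, hcube, hquad, hn, hN0]
    have hkg5 : k22 n ≤ (G22 n).card := by
      have : ((k22 n : ℝ)) ≤ ((G22 n).card : ℝ) := by
        rw [g22_real, card_E22_real]
        nlinarith [hb5, hk5, hsq, hcube, hquad, hn, hN0]
      exact_mod_cast this
    have hb5N : ((E22 n \ G22 n).card : ℝ) * n ≤ ((n:ℝ) * n * (n + 1)) * n :=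
      mul_le_mul_of_nonneg_right hb5 hN0.le
    have harith5 : ((E22 n \ G22 n).card : ℝ) * n ≤ 8 * (((E22 n).card : ℝ) - k22 n) := by
      rw [card_E22_real]; nlinarith [hb5N, hk5, hsq, hcube, hquad, hn, hN0]
    have hbd5 := class_ratio_bound _ _ _ _ g22_real hkg5 hkm5 (Q22 n) 8 n (hk22 n)
      (hQpos n).2.2 hN0 harith5
    -- assemble
    rw [hcond n]
    have ha1 : (0:ℝ) ≤ 1 - 2 * Q02 n / n := by
      rw [mul_div_assoc]; linarith
    have ha2 : (0:ℝ) ≤ 1 - 4 * Q12 n / n := by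
      rw [mul_div_assoc]; linarith
    have ha3 : (0:ℝ) ≤ 1 - 8 * Q22 n / n := by
      rw [mul_div_assoc]; linarith
    have hr3nn : (0:ℝ) ≤ ((G02 n).card.choose (k02 n) : ℝ) / ((E02 n).card.choose (k02 n) : ℝ) := by
      positivity
    have hr4nn : (0:ℝ) ≤ ((G12 n).card.choose (k12 n) : ℝ) / ((E12 n).card.choose (k12 n) : ℝ) := by
      positivity
    have hr5nn : (0:ℝ) ≤ ((G22 n).card.choose (k22 n) : ℝ) / ((E22 n).card.choose (k22 n) : ℝ) := by
      positivity
    refine ⟨mul_le_mul (mul_le_mul hbd3.1 hbd4.1 ha2 hr3nn) hbd5.1 ha3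
      (mul_nonneg hr3nn hr4nn), ?_⟩
    calc _ ≤ (1:ℝ) * 1 * 1 :=
          mul_le_mul (mul_le_mul hbd3.2 hbd4.2 hr4nn zero_le_one) hbd5.2 hr5nn (by norm_num)
      _ = 1 := by norm_num
  refine ⟨?_, hev.mono fun n h => h.1⟩
  have hLB : Tendsto (fun n : ℕ =>
      (1 - 2 * Q02 n / n) * (1 - 4 * Q12 n / n) * (1 - 8 * Q22 n / n)) atTop (nhds 1) := by
    have t2 : Tendsto (fun n : ℕ => 1 - 2 * Q02 n / (n:ℝ)) atTop (nhds 1) := by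
      have h' : Tendsto (fun n : ℕ => 2 * Q02 n / (n:ℝ)) atTop (nhds 0) := by
        have := hQ02.2.const_mul (2:ℝ)
        simpa [mul_div_assoc] using this
      simpa using tendsto_const_nhds.sub h'
    have t4 : Tendsto (fun n : ℕ => 1 - 4 * Q12 n / (n:ℝ)) atTop (nhds 1) := by
      have h' : Tendsto (fun n : ℕ => 4 * Q12 n / (n:ℝ)) atTop (nhds 0) := by
        have := hQ12.2.const_mul (4:ℝ)
        simpa [mul_div_assoc] using this
      simpa using tendsto_const_nhds.sub h'
    have t8 : Tendsto (fun n : ℕ => 1 - 8 * Q22 n / (n:ℝ)) atTop (nhds 1) := by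
      have h' : Tendsto (fun n : ℕ => 8 * Q22 n / (n:ℝ)) atTop (nhds 0) := by
        have := hQ22.2.const_mul (8:ℝ)
        simpa [mul_div_assoc] using this
      simpa using tendsto_const_nhds.sub h'
    simpa using (t2.mul t4).mul t8
  exact tendsto_of_tendsto_of_tendsto_of_le_of_le' hLB tendsto_const_nhds
    (hev.mono fun n h => h.1) (hev.mono fun n h => h.2)

end RandomBinaryRN
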